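/- Let E be a real inner product space and V̄ : E → E a differentiable vector field satisfying the conformal Killing equation ⟪DV̄(x)u, v⟫ + ⟪DV̄(x)v, u⟫ = 2σ(x)⟪u, v⟫ for all x, u, v ∈ E, for some σ : E → ℝ. Define the angle function C(y) = ⟪V̄(y), y⟫. Then for every x ∈ E with ‖x‖ = 1 and every u ∈ E with ⟪u, x⟫ = 0, the derivative of C at x in the direction u equals ⟪V̄(x), u⟫ − ⟪DV̄(x)x, u⟫. (This is Lemma 3.3 of the paper, ∇C = −(D_N V̄)^T − 𝒜V, for the unit sphere, where N = x and 𝒜u = −u.) -/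
import Mathlib


open scoped RealInnerProductSpace

/-- Lemma 3.3 of the paper on the unit sphere: the gradient of the angle function
`C(y) = ⟪V̄(y), y⟫` satisfies `∇C = −(D_N V̄)^T − 𝒜V` with `N = x`, `𝒜u = −u`. -/
theorem grad_angle_function_sphere {E : Type*} [NormedAddCommGroup E]
    [InnerProductSpace ℝ E]
    (Vbar : E → E) (hVbar : Differentiable ℝ Vbar)
    (σ : E → ℝ)
    (hconf : ∀ x u v : E,
      ⟪fderiv ℝ Vbar x u, v⟫ + ⟪fderiv ℝ Vbar x v, u⟫ = 2 * σ x * ⟪u, v⟫)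
    (C : E → ℝ) (hC : ∀ y, C y = ⟪Vbar y, y⟫) :
    ∀ x u : E, ‖x‖ = 1 → ⟪u, x⟫ = 0 →
      fderiv ℝ C x u = ⟪Vbar x, u⟫ - ⟪fderiv ℝ Vbar x x, u⟫ := by
  intro x u hx hux
  have hfun : C = fun y => ⟪Vbar y, y⟫ := funext hC
  have hd : HasFDerivAt (fun y => ⟪Vbar y, y⟫)
      ((fderivInnerCLM ℝ (Vbar x, x)).comp <|
        (fderiv ℝ Vbar x).prod (ContinuousLinearMap.id ℝ E)) x :=
    (hVbar x).hasFDerivAt.inner ℝ (hasFDerivAt_id x)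
  rw [hfun, hd.fderiv]
  have h1 := hconf x u x
  rw [hux] at h1
  have h2 : ⟪fderiv ℝ Vbar x u, x⟫ = - ⟪fderiv ℝ Vbar x x, u⟫ := by linarith
  simp [fderivInnerCLM_apply, h2, real_inner_comm]
  ring
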